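/- Let X• be a cosimplicial object of T, let I be an injective object of A and let E be an (F,I)-Eilenberg–MacLane object. Then for every s ≥ 0 there is an isomorphism of abelian groups, natural in X•, π_s Hom_T(X•, E) ≅ Hom_A(H^s(F X•), I), where π_s Hom_T(X•, E) is the s-th homology of the Moore chain complex of the simplicial abelian group [n] ↦ Hom_T(Xⁿ, E), and H^s(F X•) is the s-th cohomology of the cochain complex associated to the cosimplicial object F X• of A (with differential the alternating sum of the coface maps). -/

import Mathlib

open CategoryTheory Limits Pretriangulated

universe w v u v' u'

variable {T : Type u} [Category.{v} T] [HasZeroObject T] [HasShift T ℤ]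
  [Preadditive T] [∀ n : ℤ, (CategoryTheory.shiftFunctor T n).Additive] [Pretriangulated T]
variable {A : Type u'} [Category.{v'} A] [Abelian A]

/-- `E` is an `(F,I)`-Eilenberg–MacLane object: there is an isomorphism
`Hom_T(X, E) ≅ Hom_A(F X, I)` natural in `X` such that the canonical map `F E ⟶ I`
(the image of the identity of `E`) is an isomorphism. -/
def IsEMObject (F : T ⥤ A) (I : A) (E : T) : Prop :=
  ∃ e : ∀ X : T, (X ⟶ E) ≃ (F.obj X ⟶ I),
    (∀ ⦃X Y : T⦄ (f : X ⟶ Y) (g : Y ⟶ E), e X (f ≫ g) = F.map f ≫ e Y g) ∧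
    IsIso (e E (𝟙 E))

/-- An object of `T` is `F`-injective if it is an `(F,I)`-Eilenberg–MacLane object for
some injective object `I` of `A`. -/
def FInjective (F : T ⥤ A) (E : T) : Prop :=
  ∃ I : A, Injective I ∧ IsEMObject F I E

/-- A map `i : A₀ ⟶ B₀` in `T` is `F`-monic if `Hom_T(B₀, G) → Hom_T(A₀, G)` is surjective
for every `F`-injective object `G`. -/
def FMonic (F : T ⥤ A) {A₀ B₀ : T} (i : A₀ ⟶ B₀) : Prop :=
  ∀ G : T, FInjective F G → Function.Surjective (fun g : B₀ ⟶ G => i ≫ g)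

open AlgebraicTopology

/-- The Moore chain complex (with alternating sum differentials) of the simplicial abelian
group `[n] ↦ Hom_T(Xⁿ, E)` associated to a cosimplicial object `X` of `T`. -/
noncomputable def homComplex (E : T) (X : CosimplicialObject T) : ChainComplex AddCommGrpCat ℕ :=
  (alternatingFaceMapComplex AddCommGrpCat).obj (X.op ⋙ preadditiveYoneda.obj E)

/-- The cochain complex associated to the cosimplicial object `F X•` of `A`, with
differentials the alternating sums of the coface maps. -/
noncomputable def imageComplex (F : T ⥤ A) (X : CosimplicialObject T) : CochainComplex A ℕ :=
  (alternatingCofaceMapComplex A).obj (X ⋙ F)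


universe w₁ w₂

namespace EMHelper

open CategoryTheory.ShortComplex

/-- A cross-universe additive equivalence of short complexes of abelian groups. -/
structure SCAddEquiv (S : ShortComplex AddCommGrpCat.{w₁}) (S' : ShortComplex AddCommGrpCat.{w₂}) where
  e₁ : S.X₁ ≃+ S'.X₁
  e₂ : S.X₂ ≃+ S'.X₂
  e₃ : S.X₃ ≃+ S'.X₃
  comm_f : ∀ x : S.X₁, e₂ (S.f x) = S'.f (e₁ x)
  comm_g : ∀ x : S.X₂, e₃ (S.g x) = S'.g (e₂ x)

namespace SCAddEquiv

variable {S : ShortComplex AddCommGrpCat.{w₁}} {S' : ShortComplex AddCommGrpCat.{w₂}}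
  (E : SCAddEquiv S S')

/-- The induced equivalence on kernels. -/
def kerEquiv : AddMonoidHom.ker S.g.hom ≃+ AddMonoidHom.ker S'.g.hom where
  toFun x := ⟨E.e₂ x.1, by
    have h := (E.comm_g x.1).symm
    rw [show S.g x.1 = 0 from x.2, map_zero] at h
    exact AddMonoidHom.mem_ker.2 h⟩
  invFun y := ⟨E.e₂.symm y.1, by
    rw [AddMonoidHom.mem_ker]
    apply E.e₃.injective
    rw [E.comm_g, E.e₂.apply_symm_apply, show S'.g y.1 = 0 from y.2, map_zero]⟩
  left_inv x := by ext; simp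
  right_inv y := by ext; simp
  map_add' x y := by ext; simp

lemma map_range :
    (AddMonoidHom.range S.abToCycles).map (E.kerEquiv : AddMonoidHom.ker S.g.hom →+ AddMonoidHom.ker S'.g.hom)
      = AddMonoidHom.range S'.abToCycles := by
  ext y
  simp only [AddSubgroup.mem_map, AddMonoidHom.mem_range]
  constructor
  · rintro ⟨x, ⟨a, rfl⟩, rfl⟩
    exact ⟨E.e₁ a, by ext; exact (E.comm_f a).symm⟩
  · rintro ⟨a, rfl⟩
    exact ⟨S.abToCycles (E.e₁.symm a), ⟨E.e₁.symm a, rfl⟩, by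
      ext
      show E.e₂ (S.f (E.e₁.symm a)) = S'.f a
      rw [E.comm_f, E.e₁.apply_symm_apply]⟩

/-- The induced equivalence on the concrete homology quotients. -/
noncomputable def quotEquiv :
    (AddMonoidHom.ker S.g.hom ⧸ AddMonoidHom.range S.abToCycles) ≃+
      (AddMonoidHom.ker S'.g.hom ⧸ AddMonoidHom.range S'.abToCycles) :=
  QuotientAddGroup.congr _ _ E.kerEquiv E.map_range

/-- The induced equivalence on homology. -/
noncomputable def homologyEquiv : S.homology ≃+ S'.homology :=
  S.abHomologyIso.addCommGroupIsoToAddEquiv.trans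
    (E.quotEquiv.trans S'.abHomologyIso.addCommGroupIsoToAddEquiv.symm)

end SCAddEquiv


variable {S₁ S₂ : ShortComplex AddCommGrpCat.{w₁}}

lemma tau₂_ker_mem (φ : S₁ ⟶ S₂) (x : AddMonoidHom.ker S₁.g.hom) :
    φ.τ₂ x.1 ∈ AddMonoidHom.ker S₂.g.hom := by
  rw [AddMonoidHom.mem_ker]
  have h := CategoryTheory.ConcreteCategory.congr_hom φ.comm₂₃ x.1
  simp only [comp_apply] at h
  rw [h, show S₁.g x.1 = 0 from x.2]
  exact map_zero φ.τ₃.hom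

/-- The induced map on kernels. -/
def abφK (φ : S₁ ⟶ S₂) :
    AddCommGrpCat.of (AddMonoidHom.ker S₁.g.hom) ⟶ AddCommGrpCat.of (AddMonoidHom.ker S₂.g.hom) :=
  AddCommGrpCat.ofHom
    (AddMonoidHom.codRestrict (φ.τ₂.hom.comp (AddMonoidHom.ker S₁.g.hom).subtype)
      (AddMonoidHom.ker S₂.g.hom) (tau₂_ker_mem φ))

lemma abφK_apply (φ : S₁ ⟶ S₂) (x : AddMonoidHom.ker S₁.g.hom) :
    (abφK φ x).1 = φ.τ₂ x.1 := rfl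

lemma ab_range_le (φ : S₁ ⟶ S₂) :
    AddMonoidHom.range S₁.abToCycles ≤
      (AddMonoidHom.range S₂.abToCycles).comap (abφK φ).hom := by
  rintro _ ⟨a, rfl⟩
  refine ⟨φ.τ₁ a, ?_⟩
  ext
  show S₂.f (φ.τ₁ a) = φ.τ₂ (S₁.f a)
  have h := CategoryTheory.ConcreteCategory.congr_hom φ.comm₁₂ a
  simp only [comp_apply] at h
  exact h

/-- The induced map on the concrete homology quotients. -/
def abφH (φ : S₁ ⟶ S₂) :
    AddCommGrpCat.of (AddMonoidHom.ker S₁.g.hom ⧸ AddMonoidHom.range S₁.abToCycles) ⟶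
      AddCommGrpCat.of (AddMonoidHom.ker S₂.g.hom ⧸ AddMonoidHom.range S₂.abToCycles) :=
  AddCommGrpCat.ofHom (QuotientAddGroup.map _ _ (abφK φ).hom (ab_range_le φ))

/-- The left homology map data associated to the explicit ab-left homology data. -/
def abLHMD (φ : S₁ ⟶ S₂) :
    LeftHomologyMapData φ S₁.abLeftHomologyData S₂.abLeftHomologyData where
  φK := abφK φ
  φH := abφH φ
  commi := by ext x; rfl
  commf' := by
    ext x
    apply Subtype.ext
    show φ.τ₂ (S₁.f x) = S₂.f (φ.τ₁ x)
    have h := CategoryTheory.ConcreteCategory.congr_hom φ.comm₁₂ x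
    simp only [comp_apply] at h
    exact h.symm
  commπ := by ext x; rfl

lemma ab_homologyMap_eq (φ : S₁ ⟶ S₂) :
    homologyMap φ = S₁.abHomologyIso.hom ≫ abφH φ ≫ S₂.abHomologyIso.inv :=
  (abLHMD φ).homologyMap_eq



lemma SCAddEquiv.homologyEquiv_naturality
    {A₁ B₁ : ShortComplex AddCommGrpCat.{w₁}} {A₂ B₂ : ShortComplex AddCommGrpCat.{w₂}}
    (E : SCAddEquiv A₁ A₂) (E' : SCAddEquiv B₁ B₂)
    (φ : A₁ ⟶ B₁) (ψ : A₂ ⟶ B₂)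
    (h : ∀ x : A₁.X₂, E'.e₂ (φ.τ₂ x) = ψ.τ₂ (E.e₂ x)) (x : A₁.homology) :
    E'.homologyEquiv (homologyMap φ x) = homologyMap ψ (E.homologyEquiv x) := by
  have key : ∀ q : AddMonoidHom.ker A₁.g.hom ⧸ AddMonoidHom.range A₁.abToCycles,
      E'.quotEquiv (abφH φ q) = abφH ψ (E.quotEquiv q) := by
    intro q
    induction q using QuotientAddGroup.induction_on with
    | H z =>
      show (QuotientAddGroup.mk (E'.kerEquiv (abφK φ z)) :
          AddMonoidHom.ker B₂.g.hom ⧸ AddMonoidHom.range B₂.abToCycles) =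
        QuotientAddGroup.mk (abφK ψ (E.kerEquiv z))
      congr 1
      ext
      exact h z.1
  rw [ab_homologyMap_eq φ, ab_homologyMap_eq ψ]
  simp only [comp_apply]
  show B₂.abHomologyIso.inv (E'.quotEquiv (B₁.abHomologyIso.hom
      (B₁.abHomologyIso.inv (abφH φ (A₁.abHomologyIso.hom x))))) =
    B₂.abHomologyIso.inv (abφH ψ (A₂.abHomologyIso.hom
      (A₂.abHomologyIso.inv (E.quotEquiv (A₁.abHomologyIso.hom x)))))
  rw [Iso.inv_hom_id_apply, Iso.inv_hom_id_apply, key]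

end EMHelper


namespace EMHelper

lemma ab_sum_apply {ι : Type*} {M N : AddCommGrpCat.{w₁}} (k : Finset ι) (f : ι → (M ⟶ N)) (x : M) :
    (∑ i ∈ k, f i) x = ∑ i ∈ k, f i x := by
  induction k using Finset.cons_induction with
  | empty => rfl
  | cons a t ha ih => rw [Finset.sum_cons, Finset.sum_cons, ← ih]; rfl

section Main

open AlgebraicTopology Simplicial HomologicalComplex

variable {T : Type u} [Category.{v} T] [HasZeroObject T] [HasShift T ℤ]
  [Preadditive T] [∀ n : ℤ, (CategoryTheory.shiftFunctor T n).Additive] [Pretriangulated T]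
variable {A : Type u'} [Category.{v'} A] [Abelian A]
variable (F : T ⥤ A) [F.Additive] (I : A) (E : T) (ι : F.obj E ⟶ I)

/-- The basic additive comparison map. -/
def emHom (Z : T) : (Z ⟶ E) →+ (F.obj Z ⟶ I) :=
  AddMonoidHom.mk' (fun h => F.map h ≫ ι) (fun a b => by
    show F.map (a + b) ≫ ι = F.map a ≫ ι + F.map b ≫ ι
    rw [F.map_add, Preadditive.add_comp])

variable (hbij : ∀ Z : T, Function.Bijective fun h : Z ⟶ E => F.map h ≫ ι)

/-- The comparison equivalence of an Eilenberg-MacLane object. -/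
noncomputable def emε (Z : T) : (Z ⟶ E) ≃+ (F.obj Z ⟶ I) :=
  AddEquiv.ofBijective (emHom F I E ι Z) (hbij Z)

lemma emε_apply (Z : T) (h : Z ⟶ E) : emε F I E ι hbij Z h = F.map h ≫ ι := rfl

variable (s : ℕ)

/-- The short complex of the Moore complex around degree `s`. -/
noncomputable abbrev scT (X : CosimplicialObject T) : ShortComplex AddCommGrpCat.{v} :=
  (shortComplexFunctor' AddCommGrpCat (ComplexShape.down ℕ) (s+1) s (s-1)).obj (homComplex E X)

/-- The short complex of the image complex around degree `s`. -/
noncomputable abbrev scA (X : CosimplicialObject T) : ShortComplex A :=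
  (shortComplexFunctor' A (ComplexShape.up ℕ) (s-1) s (s+1)).obj (imageComplex F X)

/-- The short complex obtained by applying `Hom(-, I)` to `scA`. -/
noncomputable abbrev scI (X : CosimplicialObject T) : ShortComplex AddCommGrpCat.{v'} :=
  (scA F s X).op.map (preadditiveYoneda.obj I)

lemma key_d (X : CosimplicialObject T) (n : ℕ) (h : X.obj ⦋n+1⦌ ⟶ E) :
    F.map ((homComplex E X).d (n+1) n h) ≫ ι =
      (imageComplex F X).d n (n+1) ≫ (F.map h ≫ ι) := by
  have hd : (homComplex E X).d (n+1) n =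
      ∑ i : Fin (n+2), (-1 : ℤ)^(i:ℕ) • SimplicialObject.δ (X.op ⋙ preadditiveYoneda.obj E) i :=
    AlternatingFaceMapComplex.obj_d_eq _ n
  have hd' : (imageComplex F X).d n (n+1) =
      AlternatingCofaceMapComplex.objD (X ⋙ F) n :=
    CochainComplex.of_d _ (AlternatingCofaceMapComplex.objD (X ⋙ F)) n
  rw [hd, hd']
  have happ := EMHelper.ab_sum_apply (M := (homComplex E X).X (n+1)) (N := (homComplex E X).X n)
    Finset.univ
    (fun i : Fin (n+2) => (-1 : ℤ)^(i:ℕ) • SimplicialObject.δ (Functor.op X ⋙ preadditiveYoneda.obj E) i) h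
  erw [happ]
  erw [F.map_sum, Preadditive.sum_comp, AlternatingCofaceMapComplex.objD, Preadditive.sum_comp]
  refine Finset.sum_congr rfl fun i _ => ?_
  show F.map ((-1 : ℤ)^(i:ℕ) • (X.δ i ≫ h)) ≫ ι
      = ((-1 : ℤ)^(i:ℕ) • CosimplicialObject.δ (X ⋙ F) i) ≫ F.map h ≫ ι
  rw [F.map_zsmul, Preadditive.zsmul_comp, Preadditive.zsmul_comp]
  congr 1
  show F.map (X.δ i ≫ h) ≫ ι = F.map (X.δ i) ≫ F.map h ≫ ι
  rw [F.map_comp, Category.assoc]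

/-- The comparison equivalence of short complexes. -/
noncomputable def scEquiv (X : CosimplicialObject T) :
    SCAddEquiv (scT E s X) (scI F I s X) where
  e₁ := emε F I E ι hbij (X.obj ⦋s+1⦌)
  e₂ := emε F I E ι hbij (X.obj ⦋s⦌)
  e₃ := emε F I E ι hbij (X.obj ⦋s-1⦌)
  comm_f h := key_d F I E ι X s h
  comm_g h := by
    cases s with
    | zero =>
      have h1 : (homComplex E X).d 0 (0-1) = 0 :=
        HomologicalComplex.shape _ _ _ (by simp [ComplexShape.down_Rel])
      have h2 : (imageComplex F X).d (0-1) 0 = 0 :=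
        HomologicalComplex.shape _ _ _ (by simp [ComplexShape.up_Rel])
      show F.map ((homComplex E X).d 0 (0-1) h) ≫ ι
          = (imageComplex F X).d (0-1) 0 ≫ (F.map h ≫ ι)
      rw [h1, h2]
      show F.map (0 : X.obj ⦋0-1⦌ ⟶ E) ≫ ι = 0 ≫ (F.map h ≫ ι)
      rw [F.map_zero, Limits.zero_comp, Limits.zero_comp]
    | succ t => exact key_d F I E ι X t h

variable [(preadditiveYoneda.obj I : Aᵒᵖ ⥤ AddCommGrpCat.{v'}).PreservesHomology]

lemma hprevT : (ComplexShape.down ℕ).prev s = s + 1 := ChainComplex.prev ℕ s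

lemma hnextT : (ComplexShape.down ℕ).next s = s - 1 := by
  cases s with
  | zero => exact ChainComplex.next_nat_zero
  | succ t => exact ChainComplex.next_nat_succ t

lemma hprevA : (ComplexShape.up ℕ).prev s = s - 1 := by
  cases s with
  | zero => exact CochainComplex.prev_nat_zero
  | succ t => exact CochainComplex.prev_nat_succ t

lemma hnextA : (ComplexShape.up ℕ).next s = s + 1 := CochainComplex.next ℕ s

/-- Natural isomorphism computing the homology of the Moore complex. -/
noncomputable def natIsoT :
    homologyFunctor AddCommGrpCat.{v} (ComplexShape.down ℕ) s ≅
      shortComplexFunctor' AddCommGrpCat (ComplexShape.down ℕ) (s+1) s (s-1) ⋙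
        ShortComplex.homologyFunctor AddCommGrpCat :=
  homologyFunctorIso' AddCommGrpCat (ComplexShape.down ℕ) (s+1) s (s-1) (hprevT s) (hnextT s)

/-- Natural isomorphism computing the cohomology of the image complex. -/
noncomputable def natIsoA :
    homologyFunctor A (ComplexShape.up ℕ) s ≅
      shortComplexFunctor' A (ComplexShape.up ℕ) (s-1) s (s+1) ⋙
        ShortComplex.homologyFunctor A :=
  homologyFunctorIso' A (ComplexShape.up ℕ) (s-1) s (s+1) (hprevA s) (hnextA s)

/-- First comparison isomorphism. -/
noncomputable def isoT (X : CosimplicialObject T) :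
    ((homComplex E X).homology s : AddCommGrpCat.{v}) ≅ (scT E s X).homology :=
  (natIsoT s).app (homComplex E X)

/-- Second comparison isomorphism. -/
noncomputable def isoA (X : CosimplicialObject T) :
    (scI F I s X).homology ≅
      (preadditiveYoneda.obj I).obj (Opposite.op ((imageComplex F X).homology s)) :=
  ((scA F s X).op.mapHomologyIso (preadditiveYoneda.obj I)) ≪≫
    (preadditiveYoneda.obj I).mapIso
      ((scA F s X).homologyOpIso ≪≫ Iso.op ((natIsoA (A := A) s).app (imageComplex F X)))

/-- The equivalence in the main theorem. -/
noncomputable def eMain (X : CosimplicialObject T) :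
    ((homComplex E X).homology s) ≃+ (((imageComplex F X).homology s) ⟶ I) :=
  (isoT E s X).addCommGroupIsoToAddEquiv.trans
    ((scEquiv F I E ι hbij s X).homologyEquiv.trans
      (isoA F I s X).addCommGroupIsoToAddEquiv)


lemma eMain_natural (X Y : CosimplicialObject T) (f : X ⟶ Y)
    (g : (homComplex E Y).homology s) :
    eMain F I E ι hbij s X (HomologicalComplex.homologyMap
        ((alternatingFaceMapComplex AddCommGrpCat).map
          (CategoryTheory.Functor.whiskerRight (NatTrans.op f) (preadditiveYoneda.obj E))) s g) =
      HomologicalComplex.homologyMap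
          ((alternatingCofaceMapComplex A).map (CategoryTheory.Functor.whiskerRight f F)) s ≫
        eMain F I E ι hbij s Y g := by
  let Φ : homComplex E Y ⟶ homComplex E X :=
    (alternatingFaceMapComplex AddCommGrpCat).map
      (CategoryTheory.Functor.whiskerRight (NatTrans.op f) (preadditiveYoneda.obj E))
  let Ψ : imageComplex F X ⟶ imageComplex F Y :=
    (alternatingCofaceMapComplex A).map (CategoryTheory.Functor.whiskerRight f F)
  let φ : scT E s Y ⟶ scT E s X :=
    (shortComplexFunctor' AddCommGrpCat (ComplexShape.down ℕ) (s+1) s (s-1)).map Φ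
  let ψ : scA F s X ⟶ scA F s Y :=
    (shortComplexFunctor' A (ComplexShape.up ℕ) (s-1) s (s+1)).map Ψ
  let ψ' : scI F I s Y ⟶ scI F I s X :=
    (preadditiveYoneda.obj I).mapShortComplex.map (ShortComplex.opMap ψ)
  -- step 1 : naturality of `isoT`
  have s1 : (isoT E s X).hom (HomologicalComplex.homologyMap Φ s g) =
      ShortComplex.homologyMap φ ((isoT E s Y).hom g) := by
    have h1 := CategoryTheory.ConcreteCategory.congr_hom ((natIsoT s).hom.naturality Φ) g
    exact h1
  -- step 2 : the cross-universe comparison is natural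
  have hτ : ∀ x : (scT E s Y).X₂,
      (scEquiv F I E ι hbij s X).e₂ (φ.τ₂ x) = ψ'.τ₂ ((scEquiv F I E ι hbij s Y).e₂ x) := by
    intro x
    show F.map (f.app ⦋s⦌ ≫ x) ≫ ι = F.map (f.app ⦋s⦌) ≫ (F.map x ≫ ι)
    exact (congrArg (· ≫ ι) (F.map_comp _ _)).trans (Category.assoc _ _ _)
  have s2 := SCAddEquiv.homologyEquiv_naturality
    (scEquiv F I E ι hbij s Y) (scEquiv F I E ι hbij s X) φ ψ' hτ ((isoT E s Y).hom g)
  -- step 3 : naturality of `isoA`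
  have n3 : HomologicalComplex.homologyMap Ψ s ≫
        (natIsoA (A := A) s).hom.app (imageComplex F Y) =
      (natIsoA (A := A) s).hom.app (imageComplex F X) ≫ ShortComplex.homologyMap ψ :=
    (natIsoA (A := A) s).hom.naturality Ψ
  have key : ShortComplex.homologyMap (ShortComplex.opMap ψ) ≫
        ((scA F s X).homologyOpIso.hom ≫
          ((natIsoA (A := A) s).hom.app (imageComplex F X)).op)
      = (((scA F s Y).homologyOpIso.hom ≫
          ((natIsoA (A := A) s).hom.app (imageComplex F Y)).op) ≫
        (HomologicalComplex.homologyMap Ψ s).op) := by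
    erw [← Category.assoc, ShortComplex.homologyOpIso_hom_naturality (φ := ψ),
      Category.assoc, ← op_comp, ← n3, op_comp, Category.assoc]
    erw [op_comp (f := HomologicalComplex.homologyMap Ψ s)]
    exact (Category.assoc _ _ _).symm.trans (Category.assoc _ _ _).symm
  have step3 : ShortComplex.homologyMap ψ' ≫ (isoA F I s X).hom
      = (isoA F I s Y).hom ≫
          (preadditiveYoneda.obj I).map (HomologicalComplex.homologyMap Ψ s).op := by
    show ShortComplex.homologyMap ψ' ≫
        (((scA F s X).op.mapHomologyIso (preadditiveYoneda.obj I)).hom ≫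
          (preadditiveYoneda.obj I).map ((scA F s X).homologyOpIso.hom ≫
            ((natIsoA (A := A) s).hom.app (imageComplex F X)).op)) = _
    rw [← Category.assoc, ShortComplex.mapHomologyIso_hom_naturality (φ := ShortComplex.opMap ψ),
      Category.assoc, ← Functor.map_comp, key]
    show _ = (((scA F s Y).op.mapHomologyIso (preadditiveYoneda.obj I)).hom ≫
          (preadditiveYoneda.obj I).map ((scA F s Y).homologyOpIso.hom ≫
            ((natIsoA (A := A) s).hom.app (imageComplex F Y)).op)) ≫ _
    exact (congrArg (_ ≫ ·) (Functor.map_comp _ _ _)).trans (Category.assoc _ _ _).symm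
  -- assemble
  show (isoA F I s X).hom ((scEquiv F I E ι hbij s X).homologyEquiv
      ((isoT E s X).hom (HomologicalComplex.homologyMap Φ s g)))
    = HomologicalComplex.homologyMap Ψ s ≫ ((isoA F I s Y).hom
        ((scEquiv F I E ι hbij s Y).homologyEquiv ((isoT E s Y).hom g)))
  rw [s1, s2]
  have s3 := CategoryTheory.ConcreteCategory.congr_hom step3
    ((scEquiv F I E ι hbij s Y).homologyEquiv ((isoT E s Y).hom g))
  simp only [comp_apply] at s3
  rw [s3]
  rfl

end Main

end EMHelper

/-- For an `(F,I)`-Eilenberg–MacLane object `E`, there is an isomorphism of abelian groups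
`π_s Hom_T(X•, E) ≅ Hom_A(H^s(F X•), I)`, natural in the cosimplicial object `X•`. -/
theorem pi_homComplex_iso_hom_cohomology
    (F : T ⥤ A) [F.Additive] [F.IsHomological]
    (SA : A ≌ A) (comm : CategoryTheory.shiftFunctor T (1 : ℤ) ⋙ F ≅ F ⋙ SA.functor)
    (I : A) (hI : Injective I) (E : T) (hE : IsEMObject F I E) (s : ℕ) :
    ∃ e : ∀ X : CosimplicialObject T,
        ((homComplex E X).homology s) ≃+ (((imageComplex F X).homology s) ⟶ I),
      ∀ (X Y : CosimplicialObject T) (f : X ⟶ Y) (g : (homComplex E Y).homology s),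
        e X (HomologicalComplex.homologyMap
            ((alternatingFaceMapComplex AddCommGrpCat).map
              (CategoryTheory.Functor.whiskerRight (NatTrans.op f) (preadditiveYoneda.obj E))) s g) =
          HomologicalComplex.homologyMap
              ((alternatingCofaceMapComplex A).map (CategoryTheory.Functor.whiskerRight f F)) s ≫
            e Y g := by
  obtain ⟨e, he, hiso⟩ := hE
  have e_eq : ∀ (Z : T) (h : Z ⟶ E), e Z h = F.map h ≫ e E (𝟙 E) := fun Z h => by
    simpa using he h (𝟙 E)
  have hbij : ∀ Z : T, Function.Bijective fun h : Z ⟶ E => F.map h ≫ e E (𝟙 E) := by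
    intro Z
    have : (fun h : Z ⟶ E => F.map h ≫ e E (𝟙 E)) = e Z := by
      funext h
      exact (e_eq Z h).symm
    rw [this]
    exact (e Z).bijective
  letI : (preadditiveYoneda.obj I : Aᵒᵖ ⥤ AddCommGrpCat.{v'}).PreservesEpimorphisms :=
    (Injective.injective_iff_preservesEpimorphisms_preadditiveYoneda_obj I).1 hI
  letI : (preadditiveYoneda.obj I : Aᵒᵖ ⥤ AddCommGrpCat.{v'}).PreservesHomology :=
    Functor.preservesHomology_of_preservesEpis_and_kernels _
  exact ⟨fun X => EMHelper.eMain F I E (e E (𝟙 E)) hbij s X,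
    fun X Y f g => EMHelper.eMain_natural F I E (e E (𝟙 E)) hbij s X Y f g⟩
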